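/- Suppose η₁ρ₁ − η_iρ_i ∈ SEP* for all i ∈ Λ, and some η₁ρ₁ − η_jρ_j is an entanglement witness (i.e., lies in SEP* but is not positive semidefinite). Then there exists a POVM whose success probability on the ensemble strictly exceeds η₁; consequently p_SEP(E) = η₁ < p_G(E). -/

import Mathlib

open Matrix
open scoped ComplexOrder

/-- Hermitian operators on the bipartite space `ℂ^dA ⊗ ℂ^dB`, modeled as matrices
indexed by `Fin dA × Fin dB`. -/
abbrev Mat (dA dB : ℕ) := Matrix (Fin dA × Fin dB) (Fin dA × Fin dB) ℂ

/-- A bipartite operator is separable if it is a finite sum of Kronecker products of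
positive-semidefinite operators on the two factors. -/
def IsSep {dA dB : ℕ} (E : Mat dA dB) : Prop :=
  ∃ (n : ℕ) (A : Fin n → Matrix (Fin dA) (Fin dA) ℂ)
    (B : Fin n → Matrix (Fin dB) (Fin dB) ℂ),
    (∀ l, (A l).PosSemidef) ∧ (∀ l, (B l).PosSemidef) ∧
      E = ∑ l, Matrix.kroneckerMap (· * ·) (A l) (B l)

/-- Membership in the dual cone `SEP*` (block positivity): Hermitian with
`Tr(E F) ≥ 0` for every separable `F`. -/
def InSEPdual {dA dB : ℕ} (E : Mat dA dB) : Prop :=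
  E.IsHermitian ∧ ∀ F : Mat dA dB, IsSep F → 0 ≤ (E * F).trace

section Aux

variable {n : Type*} [Fintype n]

lemma trace_mul_vecMulVec (A : Matrix n n ℂ) (x : n → ℂ) :
    (A * vecMulVec x (star x)).trace = star x ⬝ᵥ A *ᵥ x := by
  simp only [Matrix.trace, Matrix.diag, Matrix.mul_apply, vecMulVec_apply, dotProduct,
    Matrix.mulVec, Pi.star_apply]
  refine Finset.sum_congr rfl fun i _ => ?_
  rw [Finset.mul_sum]
  exact Finset.sum_congr rfl fun k _ => by ring

lemma vecMulVec_sq (x : n → ℂ) :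
    vecMulVec x (star x) * vecMulVec x (star x) = (star x ⬝ᵥ x) • vecMulVec x (star x) := by
  ext i j
  simp only [Matrix.mul_apply, vecMulVec_apply, Pi.star_apply, Matrix.smul_apply,
    dotProduct, smul_eq_mul, Finset.sum_mul]
  exact Finset.sum_congr rfl fun k _ => by ring

omit [Fintype n] in
lemma vecMulVec_herm (x : n → ℂ) : (vecMulVec x (star x)).IsHermitian := by
  ext i j
  simp [vecMulVec_apply, conjTranspose_apply, mul_comm]

lemma vecMulVec_psd (x : n → ℂ) : (vecMulVec x (star x)).PosSemidef := by
  rw [vecMulVec_eq Unit, ← conjTranspose_replicateCol]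
  exact posSemidef_self_mul_conjTranspose _

lemma herm_quad_real (W : Matrix n n ℂ) (hW : W.IsHermitian) (x : n → ℂ) :
    (star x ⬝ᵥ W *ᵥ x).im = 0 := by
  rw [← Complex.conj_eq_iff_im]
  calc (starRingEnd ℂ) (star x ⬝ᵥ W *ᵥ x) = star (star x ⬝ᵥ W *ᵥ x) := rfl
    _ = star (W *ᵥ x) ⬝ᵥ x := by rw [← star_dotProduct]
    _ = star x ⬝ᵥ W *ᵥ x := by
        rw [star_mulVec, hW.eq, ← dotProduct_mulVec]

end Aux

theorem ew_gives_nonlocality {dA dB : ℕ} {ι : Type*} [Fintype ι] [DecidableEq ι]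
    (η : ι → ℝ) (ρ : ι → Mat dA dB) (a : ι)
    (hη : ∀ i, 0 ≤ η i) (hsum : ∑ i, η i = 1)
    (hρ : ∀ i, (ρ i).PosSemidef ∧ (ρ i).trace = 1)
    (hdual : ∀ i, InSEPdual ((η a : ℂ) • ρ a - (η i : ℂ) • ρ i))
    (j : ι)
    (hEW : InSEPdual ((η a : ℂ) • ρ a - (η j : ℂ) • ρ j) ∧
      ¬ ((η a : ℂ) • ρ a - (η j : ℂ) • ρ j).PosSemidef) :
    (∃ M : ι → Mat dA dB, (∀ i, (M i).PosSemidef) ∧ ∑ i, M i = 1 ∧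
      η a < ∑ i, η i * ((ρ i * M i).trace).re) ∧
    (∀ M : ι → Mat dA dB, (∀ i, IsSep (M i)) → ∑ i, M i = 1 →
      ∑ i, η i * ((ρ i * M i).trace).re ≤ η a) := by
  set W : Mat dA dB := (η a : ℂ) • ρ a - (η j : ℂ) • ρ j with hWdef
  constructor
  · -- Part 1: a strictly better POVM exists
    have hne : a ≠ j := by
      rintro rfl
      exact hEW.2 (by rw [hWdef, sub_self]; exact Matrix.PosSemidef.zero)
    have hexists : ∃ x : (Fin dA × Fin dB) → ℂ, ¬ 0 ≤ star x ⬝ᵥ W *ᵥ x := by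
      by_contra h
      push_neg at h
      exact hEW.2 (Matrix.PosSemidef.of_dotProduct_mulVec_nonneg hEW.1.1 h)
    obtain ⟨x, hx⟩ := hexists
    set z : ℂ := star x ⬝ᵥ W *ᵥ x with hz
    have hzim : z.im = 0 := herm_quad_real W hEW.1.1 x
    have hzre : z.re < 0 := by
      by_contra h
      push_neg at h
      exact hx (Complex.le_def.mpr ⟨by simpa using h, by simp [hzim]⟩)
    set cR : ℝ := ∑ i, Complex.normSq (x i) with hcR
    have hdot : star x ⬝ᵥ x = (cR : ℂ) := by
      simp only [dotProduct, Pi.star_apply, hcR]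
      push_cast
      exact Finset.sum_congr rfl fun i _ => by
        rw [Complex.normSq_eq_conj_mul_self]; rfl
    have hcpos : 0 < cR := by
      rcases lt_or_eq_of_le (Finset.sum_nonneg fun i _ => Complex.normSq_nonneg (x i)) with h | h
      · exact h
      · exfalso
        have hx0 : x = 0 := by
          funext i
          exact Complex.normSq_eq_zero.mp
            ((Finset.sum_eq_zero_iff_of_nonneg fun i _ => Complex.normSq_nonneg (x i)).mp
              h.symm i (Finset.mem_univ i))
        rw [hz, hx0] at hzre
        simp at hzre
    have hcne : (cR : ℂ) ≠ 0 := by exact_mod_cast hcpos.ne'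
    set V : Mat dA dB := vecMulVec x (star x) with hV
    set P : Mat dA dB := ((cR⁻¹ : ℝ) : ℂ) • V with hP
    have hPherm : P.IsHermitian := by
      rw [hP, Matrix.IsHermitian, conjTranspose_smul, (vecMulVec_herm x).eq]
      congr 1
      simp [Complex.star_def, Complex.conj_ofReal]
    have hPP : P * P = P := by
      rw [hP, Matrix.smul_mul, Matrix.mul_smul, hV, vecMulVec_sq, hdot, smul_smul, smul_smul]
      congr 1
      push_cast
      field_simp
    have hPpsd : P.PosSemidef := by
      refine Matrix.PosSemidef.of_dotProduct_mulVec_nonneg hPherm fun y => ?_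
      rw [hP, smul_mulVec, dotProduct_smul, smul_eq_mul]
      exact mul_nonneg (by exact_mod_cast (inv_nonneg.mpr hcpos.le)) ((vecMulVec_psd x).dotProduct_mulVec_nonneg y)
    have h1Pherm : ((1 : Mat dA dB) - P).IsHermitian := by
      rw [Matrix.IsHermitian, conjTranspose_sub, conjTranspose_one, hPherm.eq]
    have h1Ppsd : ((1 : Mat dA dB) - P).PosSemidef := by
      have key : ((1 : Mat dA dB) - P)ᴴ * ((1 : Mat dA dB) - P) = (1 : Mat dA dB) - P := by
        rw [h1Pherm.eq, Matrix.sub_mul, Matrix.one_mul, Matrix.mul_sub, Matrix.mul_one, hPP]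
        abel
      rw [← key]
      exact posSemidef_conjTranspose_mul_self _
    refine ⟨fun i => if i = a then 1 - P else if i = j then P else 0, ?_, ?_, ?_⟩
    · intro i
      dsimp only
      split_ifs
      exacts [h1Ppsd, hPpsd, Matrix.PosSemidef.zero]
    · have hsplit : ∀ i : ι, (if i = a then (1 : Mat dA dB) - P else if i = j then P else 0)
          = (if i = a then (1 : Mat dA dB) - P else 0) + (if i = j then P else 0) := by
        intro i
        by_cases h1 : i = a
        · subst h1
          simp [hne]
        · by_cases h2 : i = j <;> simp [h1, h2, Ne.symm hne]
      rw [Finset.sum_congr rfl fun i _ => hsplit i, Finset.sum_add_distrib]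
      simp only [Finset.sum_ite_eq', Finset.mem_univ, if_true]
      exact sub_add_cancel 1 P
    · -- value strictly exceeds η a
      have htrA : ∀ A : Mat dA dB, (A * P).trace = ((cR⁻¹ : ℝ) : ℂ) * (star x ⬝ᵥ A *ᵥ x) := by
        intro A
        rw [hP, Matrix.mul_smul, trace_smul, hV, trace_mul_vecMulVec, smul_eq_mul]
      have hsumval : ∑ i, η i *
            ((ρ i * (if i = a then (1 : Mat dA dB) - P else if i = j then P else 0)).trace).re
          = η a * ((ρ a * ((1 : Mat dA dB) - P)).trace).re + η j * ((ρ j * P).trace).re := by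
        have hsplit : ∀ i : ι, η i *
              ((ρ i * (if i = a then (1 : Mat dA dB) - P else if i = j then P else 0)).trace).re
            = (if i = a then η a * ((ρ a * ((1 : Mat dA dB) - P)).trace).re else 0)
              + (if i = j then η j * ((ρ j * P).trace).re else 0) := by
          intro i
          by_cases h1 : i = a
          · subst h1
            simp [hne]
          · by_cases h2 : i = j
            · subst h2
              simp [h1, Ne.symm hne]
            · simp [h1, h2]
        rw [Finset.sum_congr rfl fun i _ => hsplit i, Finset.sum_add_distrib]
        simp only [Finset.sum_ite_eq', Finset.mem_univ, if_true]
      rw [hsumval]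
      have hzval : z = (η a : ℂ) * (star x ⬝ᵥ ρ a *ᵥ x) - (η j : ℂ) * (star x ⬝ᵥ ρ j *ᵥ x) := by
        rw [hz, hWdef, Matrix.sub_mulVec, dotProduct_sub, smul_mulVec, smul_mulVec,
          dotProduct_smul, dotProduct_smul, smul_eq_mul, smul_eq_mul]
      have hq : (η a : ℂ) * (ρ a * ((1 : Mat dA dB) - P)).trace + (η j : ℂ) * (ρ j * P).trace
          = (η a : ℂ) - ((cR⁻¹ : ℝ) : ℂ) * z := by
        have h1 : (ρ a * ((1 : Mat dA dB) - P)).trace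
            = 1 - ((cR⁻¹ : ℝ) : ℂ) * (star x ⬝ᵥ ρ a *ᵥ x) := by
          rw [Matrix.mul_sub, Matrix.mul_one, trace_sub, (hρ a).2, htrA]
        rw [h1, htrA, hzval]
        ring
      have hre := congrArg Complex.re hq
      rw [Complex.add_re, Complex.re_ofReal_mul, Complex.re_ofReal_mul, Complex.sub_re,
        Complex.re_ofReal_mul, Complex.ofReal_re] at hre
      rw [hre]
      have hneg : cR⁻¹ * z.re < 0 := mul_neg_of_pos_of_neg (inv_pos.mpr hcpos) hzre
      linarith only [hneg]
  · -- Part 2: separable POVMs cannot exceed η a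
    intro M hsep hone
    have h1 : ∀ i, ((((η a : ℂ) • ρ a - (η i : ℂ) • ρ i)) * M i).trace
        = (η a : ℂ) * (ρ a * M i).trace - (η i : ℂ) * (ρ i * M i).trace := by
      intro i
      rw [Matrix.sub_mul, trace_sub, Matrix.smul_mul, Matrix.smul_mul, trace_smul, trace_smul,
        smul_eq_mul, smul_eq_mul]
    have key : ∑ i, ((η i : ℂ) * (ρ i * M i).trace)
        = (η a : ℂ) - ∑ i, ((((η a : ℂ) • ρ a - (η i : ℂ) • ρ i) * M i).trace) := by
      rw [Finset.sum_congr rfl fun i _ => h1 i, Finset.sum_sub_distrib, ← Finset.mul_sum]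
      have h2 : ∑ i, (ρ a * M i).trace = 1 := by
        rw [← trace_sum, ← Finset.mul_sum, hone, Matrix.mul_one, (hρ a).2]
      rw [h2]
      ring
    have hre := congrArg Complex.re key
    rw [Complex.re_sum, Complex.sub_re, Complex.ofReal_re, Complex.re_sum] at hre
    have hre' : ∑ i, η i * ((ρ i * M i).trace).re
        = η a - ∑ i, ((((η a : ℂ) • ρ a - (η i : ℂ) • ρ i) * M i).trace).re := by
      rw [← hre]
      exact Finset.sum_congr rfl fun i _ => (Complex.re_ofReal_mul _ _).symm
    rw [hre']
    have hnn : 0 ≤ ∑ i, ((((η a : ℂ) • ρ a - (η i : ℂ) • ρ i) * M i).trace).re :=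
      Finset.sum_nonneg fun i _ =>
        (Complex.le_def.mp ((hdual i).2 (M i) (hsep i))).1
    linarith
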